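/- For every n ≥ 3, there is no combinatorial magic polygon P(n,2) in which the label z (2i) of every vertex is odd. -/

import Mathlib

/-- The labeling function of a combinatorial magic polygon `P(n,2)`:
the `2n` boundary labels `z p` (even positions are vertices, odd positions are
edge midpoints) together with the center label `c`. -/
def magicLabels2 (n : ℕ) (z : ZMod (2 * n) → ℕ) (c : ℕ) : ZMod (2 * n) ⊕ Unit → ℕ :=
  Sum.elim z (fun _ => c)

/-- `(z, c, u)` is a combinatorial magic polygon `P(n,2)`:
(1) the `2n+1` labels are exactly `1, …, 2n+1`, each occurring once;
(2) every side sum `z (2i) + z (2i+1) + z (2i+2)` equals `u`;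
(3) every sum `z p + c + z (p + n)` along a symmetry axis equals `u`. -/
def IsMagicPolygon2 (n : ℕ) (z : ZMod (2 * n) → ℕ) (c u : ℕ) : Prop :=
  Function.Injective (magicLabels2 n z c) ∧
  Set.range (magicLabels2 n z c) = Set.Icc 1 (2 * n + 1) ∧
  (∀ i : ZMod (2 * n), z (2 * i) + z (2 * i + 1) + z (2 * i + 2) = u) ∧
  (∀ p : ZMod (2 * n), z p + c + z (p + (n : ℕ)) = u)

private lemma sum_range_two_mul (f : ℕ → ℕ) (n : ℕ) :
    ∑ k ∈ Finset.range (2 * n), f k = ∑ k ∈ Finset.range n, (f (2 * k) + f (2 * k + 1)) := by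
  induction n with
  | zero => simp
  | succ m ih =>
      have h : 2 * (m + 1) = (2 * m + 1) + 1 := by ring
      rw [h, Finset.sum_range_succ, Finset.sum_range_succ, ih, Finset.sum_range_succ]
      ring

private lemma sum_Icc_one (m : ℕ) : (∑ k ∈ Finset.Icc 1 m, k) * 2 = m * (m + 1) := by
  induction m with
  | zero => simp
  | succ k ih =>
      rw [Finset.sum_Icc_succ_top (by omega)]
      nlinarith [ih]

theorem magicPolygon2_no_all_odd_vertices (n : ℕ) (hn : 3 ≤ n) :
    ¬ ∃ (z : ZMod (2 * n) → ℕ) (c u : ℕ),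
      IsMagicPolygon2 n z c u ∧ ∀ i : ZMod (2 * n), Odd (z (2 * i)) := by
  rintro ⟨z, c, u, ⟨hinj, hrange, hside, haxis⟩, hodd⟩
  have hNZ : NeZero (2 * n) := ⟨by omega⟩
  -- every point recovered from its val
  have hval : ∀ p : ZMod (2 * n), ((p.val : ℕ) : ZMod (2 * n)) = p := fun p =>
    (ZMod.natCast_val p).trans (ZMod.cast_id _ _)
  -- vertices (even val) have odd labels
  have hV : ∀ p : ZMod (2 * n), Even p.val → Odd (z p) := by
    intro p ⟨m, hm⟩
    have : p = 2 * (m : ZMod (2 * n)) := by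
      rw [← hval p, hm]; push_cast; ring
    rw [this]; exact hodd _
  -- midpoints (odd val) have labels ≡ u mod 2
  have hM : ∀ p : ZMod (2 * n), ¬ Even p.val → z p % 2 = u % 2 := by
    intro p hp
    obtain ⟨m, hm⟩ := Nat.odd_iff.mpr (Nat.not_even_iff.mp hp)
    have hpeq : p = 2 * (m : ZMod (2 * n)) + 1 := by
      rw [← hval p, hm]; push_cast; ring
    have h1 := hside (m : ZMod (2 * n))
    have h2 := hodd (m : ZMod (2 * n))
    have h3 : Odd (z (2 * (m : ZMod (2 * n)) + 2)) := by
      have : (2 : ZMod (2 * n)) * (m : ZMod (2 * n)) + 2 = 2 * ((m : ZMod (2 * n)) + 1) := by ring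
      rw [this]; exact hodd _
    obtain ⟨a, ha⟩ := h2; obtain ⟨b, hb⟩ := h3
    rw [hpeq]; omega
  -- parity of c
  have hnval : ((n : ZMod (2 * n))).val = n := ZMod.val_cast_of_lt (by omega)
  have hc : (¬ Even n → c % 2 = 1) ∧ (Even n → c % 2 = u % 2) := by
    have h0 := haxis 0
    rw [zero_add] at h0
    have hz0 : Odd (z 0) := by
      have : (0 : ZMod (2 * n)) = 2 * 0 := by ring
      rw [this]; exact hodd _
    obtain ⟨a, ha⟩ := hz0
    constructor
    · intro hne
      have := hM (n : ZMod (2 * n)) (by rw [hnval]; exact hne)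
      omega
    · intro he
      obtain ⟨b, hb⟩ := hV (n : ZMod (2 * n)) (by rw [hnval]; exact he)
      omega
  -- labels are in Icc
  have hmem : ∀ x, 1 ≤ magicLabels2 n z c x ∧ magicLabels2 n z c x ≤ 2 * n + 1 := by
    intro x
    have : magicLabels2 n z c x ∈ Set.Icc 1 (2 * n + 1) := hrange ▸ Set.mem_range_self x
    exact this
  -- c is odd in all surviving cases; first kill u odd
  by_cases hu : u % 2 = 1
  · -- all labels odd, but 2 is a label
    have hcodd : c % 2 = 1 := by
      rcases Nat.even_or_odd n with he | ho
      · rw [hc.2 he]; exact hu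
      · exact hc.1 (Nat.not_even_iff_odd.mpr ho)
    have h2 : (2 : ℕ) ∈ Set.range (magicLabels2 n z c) := by
      rw [hrange]; constructor <;> omega
    obtain ⟨x, hx⟩ := h2
    rcases x with p | _
    · by_cases hp : Even p.val
      · obtain ⟨a, ha⟩ := hV p hp
        simp only [magicLabels2, Sum.elim_inl] at hx; omega
      · have := hM p hp
        simp only [magicLabels2, Sum.elim_inl] at hx; omega
    · simp only [magicLabels2, Sum.elim_inr] at hx; omega
  · -- u even
    have hueven : u % 2 = 0 := by omega
    -- notation
    set Z : ℕ → ℕ := fun k => z ((k : ℕ) : ZMod (2 * n)) with hZ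
    -- sums over ZMod (2 * n) equal sums over range (2 * n)
    have hsum : ∀ f : ZMod (2 * n) → ℕ, ∑ p : ZMod (2 * n), f p = ∑ k ∈ Finset.range (2 * n), f ((k : ℕ) : ZMod (2 * n)) := by
      intro f
      apply Finset.sum_nbij' (fun p => p.val) (fun k => ((k : ℕ) : ZMod (2 * n)))
      · intro p _; exact Finset.mem_range.mpr (ZMod.val_lt p)
      · intro k _; exact Finset.mem_univ _
      · intro p _; exact hval p
      · intro k hk; exact ZMod.val_cast_of_lt (Finset.mem_range.mp hk)
      · intro p _; rw [hval p]
    -- periodicity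
    have hper : ∀ k : ℕ, Z (k + (2 * n)) = Z k := by
      intro k
      have h0 : (2 * ((n : ℕ) : ZMod (2 * n))) = 0 := by
        have h1 := ZMod.natCast_self (2 * n)
        push_cast at h1
        exact h1
      simp only [hZ]
      push_cast
      rw [h0, add_zero]
    -- boundary sum
    set SV := ∑ k ∈ Finset.range n, Z (2 * k) with hSV
    set SM := ∑ k ∈ Finset.range n, Z (2 * k + 1) with hSM
    have hSB : ∑ p : ZMod (2 * n), z p = SV + SM := by
      rw [hsum z]
      have : ∑ k ∈ Finset.range (2 * n), Z k = ∑ k ∈ Finset.range n, (Z (2 * k) + Z (2 * k + 1)) :=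
        sum_range_two_mul Z n
      rw [show (∑ k ∈ Finset.range (2 * n), z ((k : ℕ) : ZMod (2 * n))) = ∑ k ∈ Finset.range (2 * n), Z k from rfl,
        this, Finset.sum_add_distrib]
    -- axis sum identity : 2*(SV+SM) + (2 * n)*c = (2 * n)*u
    have hconstc : ∑ _p : ZMod (2 * n), c = 2 * n * c := by
      rw [Finset.sum_const, Finset.card_univ, ZMod.card, smul_eq_mul]
    have hconstu : ∑ _p : ZMod (2 * n), u = 2 * n * u := by
      rw [Finset.sum_const, Finset.card_univ, ZMod.card, smul_eq_mul]
    have haxsum : 2 * (SV + SM) + (2 * n) * c = (2 * n) * u := by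
      have h2 : ∑ p : ZMod (2 * n), z (p + (n : ℕ)) = ∑ p : ZMod (2 * n), z p :=
        Fintype.sum_equiv (Equiv.addRight ((n : ℕ) : ZMod (2 * n))) _ _ (fun p => rfl)
      have h1 : (∑ p : ZMod (2 * n), z p) + (∑ _p : ZMod (2 * n), c)
          + (∑ p : ZMod (2 * n), z (p + (n : ℕ))) = ∑ _p : ZMod (2 * n), (u : ℕ) := by
        rw [← Finset.sum_add_distrib, ← Finset.sum_add_distrib]
        exact Finset.sum_congr rfl fun p _ => haxis p
      rw [h2, hSB, hconstc, hconstu] at h1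
      linarith [h1]
    -- side sum identity
    have hTE : ∑ p : ZMod (2 * n), z (2 * p) = 2 * SV := by
      rw [hsum (fun p => z (2 * p))]
      have hcast : ∀ k : ℕ, z (2 * ((k : ℕ) : ZMod (2 * n))) = Z (2 * k) := by
        intro k; simp only [hZ]; push_cast; ring_nf
      simp only [hcast]
      rw [show (Finset.range (2 * n)) = Finset.range (n + n) from by congr 1; ring]
      rw [Finset.sum_range_add]
      have : ∀ k ∈ Finset.range n, Z (2 * (n + k)) = Z (2 * k) := by
        intro k _
        have h : 2 * (n + k) = 2 * k + (2 * n) := by ring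
        rw [h, hper]
      rw [Finset.sum_congr rfl this, hSV]; ring
    have hTO : ∑ p : ZMod (2 * n), z (2 * p + 1) = 2 * SM := by
      rw [hsum (fun p => z (2 * p + 1))]
      have hcast : ∀ k : ℕ, z (2 * ((k : ℕ) : ZMod (2 * n)) + 1) = Z (2 * k + 1) := by
        intro k; simp only [hZ]; push_cast; ring_nf
      simp only [hcast]
      rw [show (Finset.range (2 * n)) = Finset.range (n + n) from by congr 1; ring]
      rw [Finset.sum_range_add]
      have : ∀ k ∈ Finset.range n, Z (2 * (n + k) + 1) = Z (2 * k + 1) := by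
        intro k _
        have h : 2 * (n + k) + 1 = (2 * k + 1) + (2 * n) := by ring
        rw [h, hper]
      rw [Finset.sum_congr rfl this, hSM]; ring
    have hsidesum : 4 * SV + 2 * SM = (2 * n) * u := by
      have h2 : ∑ p : ZMod (2 * n), z (2 * p + 2) = ∑ p : ZMod (2 * n), z (2 * p) := by
        apply Fintype.sum_equiv (Equiv.addRight 1)
        intro p
        simp only [Equiv.coe_addRight]
        ring_nf
      have h1 : (∑ p : ZMod (2 * n), z (2 * p)) + (∑ p : ZMod (2 * n), z (2 * p + 1))
          + (∑ p : ZMod (2 * n), z (2 * p + 2)) = ∑ _p : ZMod (2 * n), (u : ℕ) := by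
        rw [← Finset.sum_add_distrib, ← Finset.sum_add_distrib]
        exact Finset.sum_congr rfl fun p _ => hside p
      rw [h2, hTE, hTO, hconstu] at h1
      linarith [h1]
    -- hence SV = n * c
    have hSVnc : SV = n * c := by linarith [haxsum, hsidesum]
    -- total sum
    have htot : (SV + SM + c) * 2 = (2 * n + 1) * (2 * n + 2) := by
      have himg : Finset.image (magicLabels2 n z c) Finset.univ = Finset.Icc 1 (2 * n + 1) := by
        apply Finset.coe_injective
        rw [Finset.coe_image, Finset.coe_univ, Set.image_univ, hrange, Finset.coe_Icc]
      have h1 : ∑ x ∈ Finset.image (magicLabels2 n z c) Finset.univ, x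
          = ∑ x : ZMod (2 * n) ⊕ Unit, magicLabels2 n z c x :=
        Finset.sum_image (fun x _ y _ h => hinj h)
      rw [himg] at h1
      rw [Fintype.sum_sum_type] at h1
      simp only [magicLabels2, Sum.elim_inl, Sum.elim_inr] at h1
      have hcu2 : ∑ _x : Unit, c = c := by simp
      rw [hSB, hcu2] at h1
      have h2 := sum_Icc_one (2 * n + 1)
      linarith [h1, h2]
    -- odd values finset
    have hOsum : ∑ v ∈ (Finset.Icc 1 (2 * n + 1)).filter (fun v => v % 2 = 1), v = (n + 1) ^ 2 := by
      have he : (Finset.Icc 1 (2 * n + 1)).filter (fun v => v % 2 = 1)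
          = (Finset.range (n + 1)).image (fun k => 2 * k + 1) := by
        ext v
        simp only [Finset.mem_filter, Finset.mem_Icc, Finset.mem_image, Finset.mem_range]
        constructor
        · rintro ⟨⟨h1, h2⟩, h3⟩; exact ⟨v / 2, by omega, by omega⟩
        · rintro ⟨k, hk, rfl⟩; omega
      rw [he, Finset.sum_image (by intro x _ y _ h; simp only at h; omega)]
      rw [Finset.sum_add_distrib, Finset.sum_const, Finset.card_range, ← Finset.mul_sum,
        smul_eq_mul, mul_one]
      have hgauss : (∑ i ∈ Finset.range (n + 1), i) * 2 = (n + 1) * n := by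
        simpa using Finset.sum_range_id_mul_two (n + 1)
      nlinarith [hgauss]
    -- vertex labels are injective as a family over range n
    have hZinj : ∀ x ∈ Finset.range n, ∀ y ∈ Finset.range n, Z (2 * x) = Z (2 * y) → x = y := by
      intro x hx y hy h
      simp only [Finset.mem_range] at hx hy
      have h1 : (Sum.inl (((2 * x : ℕ) : ZMod (2 * n))) : ZMod (2 * n) ⊕ Unit) = Sum.inl ((2 * y : ℕ) : ZMod (2 * n)) :=
        hinj h
      have h2 : ((2 * x : ℕ) : ZMod (2 * n)) = ((2 * y : ℕ) : ZMod (2 * n)) := by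
        simpa using h1
      have h3 := congrArg ZMod.val h2
      rw [ZMod.val_cast_of_lt (by omega), ZMod.val_cast_of_lt (by omega)] at h3
      omega
    have hZodd : ∀ k, Odd (Z (2 * k)) := by
      intro k
      have h : ((2 * k : ℕ) : ZMod (2 * n)) = 2 * ((k : ℕ) : ZMod (2 * n)) := by push_cast; ring
      simp only [hZ, h]; exact hodd _
    have hZmem : ∀ k, 1 ≤ Z (2 * k) ∧ Z (2 * k) ≤ 2 * n + 1 := fun k => hmem (Sum.inl _)
    have himgsum : ∑ v ∈ (Finset.range n).image (fun k => Z (2 * k)), v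
        = ∑ k ∈ Finset.range n, Z (2 * k) := Finset.sum_image hZinj
    -- c must be odd
    have hcodd : c % 2 = 1 := by
      by_contra hce
      have hce' : c % 2 = 0 := by omega
      have himg2 : (Finset.range n).image (fun k => Z (2 * k))
          = (Finset.Icc 1 (2 * n + 1)).filter (fun v => v % 2 = 1) := by
        ext v
        simp only [Finset.mem_image, Finset.mem_range, Finset.mem_filter, Finset.mem_Icc]
        constructor
        · rintro ⟨k, hk, rfl⟩
          obtain ⟨a, ha⟩ := hZodd k
          exact ⟨⟨(hZmem k).1, (hZmem k).2⟩, by omega⟩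
        · rintro ⟨⟨h1, h2⟩, h3⟩
          have hv : v ∈ Set.range (magicLabels2 n z c) := by
            rw [hrange]; exact ⟨h1, h2⟩
          obtain ⟨x, hx⟩ := hv
          rcases x with p | _
          · simp only [magicLabels2, Sum.elim_inl] at hx
            by_cases hp : Even p.val
            · obtain ⟨m, hm⟩ := hp
              refine ⟨m, by have := ZMod.val_lt p; omega, ?_⟩
              have h4 : ((2 * m : ℕ) : ZMod (2 * n)) = p := by rw [← hval p, hm]; push_cast; ring
              simp only [hZ, h4, hx]
            · have := hM p hp; omega
          · simp only [magicLabels2, Sum.elim_inr] at hx; omega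
      have hsum2 : SV = (n + 1) ^ 2 := by
        rw [hSV, ← himgsum, himg2]
        exact hOsum
      rw [hSVnc] at hsum2
      obtain ⟨a, ha⟩ : Even (n * c) :=
        (Nat.even_mul).mpr (Or.inr (Nat.even_iff.mpr hce'))
      have hne : Even n := by
        rcases Nat.even_or_odd n with he | ho
        · exact he
        · exact absurd (hc.1 (Nat.not_even_iff_odd.mpr ho)) (by omega)
      obtain ⟨m, hm⟩ := hne
      have hsq : (n + 1) ^ 2 = 2 * (2 * m * m + 2 * m) + 1 := by rw [hm]; ring
      omega
    -- now c odd; n must be odd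
    have hno : ¬ Even n := by
      intro he
      have := hc.2 he
      omega
    -- odd values = vertex labels ∪ {c}
    have himg3 : insert c ((Finset.range n).image (fun k => Z (2 * k)))
        = (Finset.Icc 1 (2 * n + 1)).filter (fun v => v % 2 = 1) := by
      ext v
      simp only [Finset.mem_insert, Finset.mem_image, Finset.mem_range, Finset.mem_filter,
        Finset.mem_Icc]
      constructor
      · rintro (rfl | ⟨k, hk, rfl⟩)
        · have := hmem (Sum.inr ())
          simp only [magicLabels2, Sum.elim_inr] at this
          exact ⟨this, hcodd⟩
        · obtain ⟨a, ha⟩ := hZodd k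
          exact ⟨⟨(hZmem k).1, (hZmem k).2⟩, by omega⟩
      · rintro ⟨⟨h1, h2⟩, h3⟩
        have hv : v ∈ Set.range (magicLabels2 n z c) := by
          rw [hrange]; exact ⟨h1, h2⟩
        obtain ⟨x, hx⟩ := hv
        rcases x with p | _
        · simp only [magicLabels2, Sum.elim_inl] at hx
          by_cases hp : Even p.val
          · obtain ⟨m, hm⟩ := hp
            refine Or.inr ⟨m, by have := ZMod.val_lt p; omega, ?_⟩
            have h4 : ((2 * m : ℕ) : ZMod (2 * n)) = p := by rw [← hval p, hm]; push_cast; ring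
            simp only [hZ, h4, hx]
          · have := hM p hp; omega
        · simp only [magicLabels2, Sum.elim_inr] at hx; exact Or.inl hx.symm
    have hcnot : c ∉ (Finset.range n).image (fun k => Z (2 * k)) := by
      simp only [Finset.mem_image, Finset.mem_range]
      rintro ⟨k, hk, hkc⟩
      have h5 : (Sum.inl (((2 * k : ℕ) : ZMod (2 * n))) : ZMod (2 * n) ⊕ Unit) = Sum.inr () := hinj hkc
      exact absurd h5 (by simp)
    have hins : ∑ v ∈ insert c ((Finset.range n).image (fun k => Z (2 * k))), v
        = c + ∑ v ∈ (Finset.range n).image (fun k => Z (2 * k)), v :=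
      Finset.sum_insert hcnot
    have hsum3 : c + SV = (n + 1) ^ 2 := by
      rw [hSV, ← himgsum, ← hins, himg3]
      exact hOsum
    rw [hSVnc] at hsum3
    have h7 : (n + 1) * c = (n + 1) * (n + 1) := by linarith [hsum3]
    have hceq : c = n + 1 := Nat.eq_of_mul_eq_mul_left (by omega) h7
    obtain ⟨m, hm⟩ := Nat.odd_iff.mpr (Nat.not_even_iff.mp hno)
    omega
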